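/- Let m ≥ 1 and r ≥ 0 be integers and N := 2^{m+r}. For every function a : {0,1}^m × {0,1}^m → ℂ (not necessarily normalized), the following exact matrix identity holds: M(a) = ξ'(a) ⊗ (I_N/N) + (ξ(a) − ξ'(a)) ⊗ ((J_N − I_N)/(N(N−1))), where I_N and J_N are the identity and all-ones matrices with rows and columns indexed by {0,1}^{m+r}. -/

import Mathlib

open scoped BigOperators
open Kronecker Matrix

/-- Bit strings of length `m`. -/
abbrev BS (m : ℕ) := Fin m → Bool

/-- `y‖0^r` : the bit string `y` padded with `r` zeros, an element of `{0,1}^{m+r}`. -/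
def pad (m r : ℕ) (y : BS m) : BS (m + r) :=
  fun i => if h : (i : ℕ) < m then y ⟨i, h⟩ else false

/-- `ξ(a)_{x,x'} := (Σ_y a_{x,y}) · conj(Σ_y a_{x',y})`. -/
noncomputable def xi (m : ℕ) (a : BS m → BS m → ℂ) : Matrix (BS m) (BS m) ℂ :=
  Matrix.of fun x x' => (∑ y : BS m, a x y) * (starRingEnd ℂ) (∑ y : BS m, a x' y)

/-- `ξ'(a)_{x,x'} := Σ_y a_{x,y} · conj(a_{x',y})`. -/
noncomputable def xi' (m : ℕ) (a : BS m → BS m → ℂ) : Matrix (BS m) (BS m) ℂ :=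
  Matrix.of fun x x' => ∑ y : BS m, a x y * (starRingEnd ℂ) (a x' y)

/-- The all-ones matrix `J` indexed by `{0,1}^k`. -/
def Jmat (k : ℕ) : Matrix (BS k) (BS k) ℂ :=
  Matrix.of fun _ _ => 1

/-- The matrix
`M(a) := (1/N!)·Σ_{π ∈ S({0,1}^{m+r})} Σ_{x,x',y,y'} a_{x,y}·conj(a_{x',y'})·
  (E_{x,x'} ⊗ E_{π(y‖0^r),π(y'‖0^r)})` with `N = 2^{m+r}`. -/
noncomputable def Mmat (m r : ℕ) (a : BS m → BS m → ℂ) :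
    Matrix (BS m × BS (m + r)) (BS m × BS (m + r)) ℂ :=
  ((Nat.factorial (2 ^ (m + r)) : ℂ))⁻¹ •
    ∑ π : Equiv.Perm (BS (m + r)), ∑ x : BS m, ∑ x' : BS m, ∑ y : BS m, ∑ y' : BS m,
      (a x y * (starRingEnd ℂ) (a x' y')) •
        (Matrix.single x x' (1 : ℂ) ⊗ₖ
          Matrix.single (π (pad m r y)) (π (pad m r y')) (1 : ℂ))

section Counting

open Equiv

variable {α : Type*} [Fintype α] [DecidableEq α]

lemma card_fix_one (u : α) :
    Fintype.card {π : Perm α // π u = u} = (Fintype.card α - 1).factorial := by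
  have e1 : {π : Perm α // π u = u} ≃ {f : Perm α // ∀ a, ¬ a ≠ u → f a = a} :=
    Equiv.subtypeEquivRight (by
      intro f
      constructor
      · intro h a ha
        rcases not_not.mp ha with rfl; exact h
      · intro h; exact h u (not_not.mpr rfl))
  have e2 : Perm {a : α // a ≠ u} ≃ {f : Perm α // ∀ a, ¬ a ≠ u → f a = a} :=
    Equiv.Perm.subtypeEquivSubtypePerm _
  have hcard : Fintype.card {a : α // a ≠ u} = Fintype.card α - 1 := by
    simp [Fintype.card_subtype_compl]
  rw [Fintype.card_congr (e1.trans e2.symm), Fintype.card_perm, hcard]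

lemma card_fix_pair (u v : α) (huv : u ≠ v) :
    Fintype.card {π : Perm α // π u = u ∧ π v = v} = (Fintype.card α - 2).factorial := by
  have e1 : {π : Perm α // π u = u ∧ π v = v} ≃
      {f : Perm α // ∀ a, ¬ (a ≠ u ∧ a ≠ v) → f a = a} :=
    Equiv.subtypeEquivRight (by
      intro f
      constructor
      · intro h a ha
        rw [not_and_or, not_not, not_not] at ha
        rcases ha with rfl | rfl
        · exact h.1
        · exact h.2
      · exact fun h => ⟨h u (by simp), h v (by simp)⟩)
  have e2 : Perm {a : α // a ≠ u ∧ a ≠ v} ≃ {f : Perm α // ∀ a, ¬ (a ≠ u ∧ a ≠ v) → f a = a} :=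
    Equiv.Perm.subtypeEquivSubtypePerm _
  have hcard : Fintype.card {a : α // a ≠ u ∧ a ≠ v} = Fintype.card α - 2 := by
    rw [Fintype.card_subtype]
    have : (Finset.univ.filter fun a : α => a ≠ u ∧ a ≠ v) = Finset.univ \ {u, v} := by
      ext a; simp [not_or, and_comm]
    rw [this, Finset.card_sdiff_of_subset (Finset.subset_univ _), Finset.card_pair huv,
      Finset.card_univ]
  rw [Fintype.card_congr (e1.trans e2.symm), Fintype.card_perm, hcard]

lemma count_one (u s : α) :
    (Finset.univ.filter fun π : Perm α => π u = s).card
      = (Fintype.card α - 1).factorial := by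
  rw [← Fintype.card_subtype]
  have e : {π : Perm α // π u = s} ≃ {π : Perm α // π u = u} := by
    refine ⟨fun π => ⟨Equiv.swap u s * π.1, by simp [π.2]⟩,
      fun π => ⟨Equiv.swap u s * π.1, by simp [π.2]⟩, ?_, ?_⟩ <;>
    · intro π
      apply Subtype.ext
      simp [← mul_assoc]
  rw [Fintype.card_congr e, card_fix_one]

lemma count_pair (u v s t : α) (huv : u ≠ v) (hst : s ≠ t) :
    (Finset.univ.filter fun π : Perm α => π u = s ∧ π v = t).card
      = (Fintype.card α - 2).factorial := by
  obtain ⟨σ, hσs, hσt⟩ : ∃ σ : Perm α, σ s = u ∧ σ t = v := by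
    refine ⟨Equiv.swap (Equiv.swap s u t) v * Equiv.swap s u, ?_, ?_⟩
    · have h1 : Equiv.swap s u t ≠ u := by
        rcases eq_or_ne t u with h | h
        · subst h
          rw [Equiv.swap_apply_right]
          exact fun hsu => hst (hsu.symm ▸ rfl)
        · rw [Equiv.swap_apply_of_ne_of_ne hst.symm h]; exact h
      simp only [Equiv.Perm.mul_apply, Equiv.swap_apply_left]
      exact Equiv.swap_apply_of_ne_of_ne h1.symm huv
    · simp [Equiv.Perm.mul_apply]
  rw [← Fintype.card_subtype]
  have e : {π : Perm α // π u = s ∧ π v = t} ≃ {π : Perm α // π u = u ∧ π v = v} :=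
    ⟨fun π => ⟨σ * π.1, by simp [π.2.1, π.2.2, hσs, hσt]⟩,
     fun π => ⟨σ⁻¹ * π.1, by
        constructor
        · rw [Equiv.Perm.mul_apply, π.2.1, ← hσs, Equiv.Perm.inv_def, Equiv.symm_apply_apply]
        · rw [Equiv.Perm.mul_apply, π.2.2, ← hσt, Equiv.Perm.inv_def, Equiv.symm_apply_apply]⟩,
     fun π => by apply Subtype.ext; simp [← mul_assoc],
     fun π => by apply Subtype.ext; simp [← mul_assoc]⟩
  rw [Fintype.card_congr e, card_fix_pair u v huv]

end Counting

lemma pad_inj (m r : ℕ) : Function.Injective (pad m r) := by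
  intro y y' h
  funext i
  have h2 := congrFun h ⟨(i : ℕ), by omega⟩
  simpa [pad, i.isLt] using h2

lemma Mmat_apply (m r : ℕ) (a : BS m → BS m → ℂ) (x x' : BS m) (s t : BS (m + r)) :
    Mmat m r a (x, s) (x', t) =
      ((Nat.factorial (2 ^ (m + r)) : ℂ))⁻¹ *
        ∑ y : BS m, ∑ y' : BS m, a x y * (starRingEnd ℂ) (a x' y') *
          ((Finset.univ.filter fun π : Equiv.Perm (BS (m + r)) =>
              π (pad m r y) = s ∧ π (pad m r y') = t).card : ℂ) := by
  simp only [Mmat, Matrix.smul_apply, Matrix.sum_apply, smul_eq_mul,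
    Matrix.kroneckerMap_apply, Matrix.single, Matrix.of_apply]
  congr 1
  have key : ∀ π : Equiv.Perm (BS (m + r)),
      (∑ x₂ : BS m, ∑ x₃ : BS m, ∑ x₄ : BS m, ∑ x₅ : BS m,
        a x₂ x₄ * (starRingEnd ℂ) (a x₃ x₅) *
          ((if x₂ = x ∧ x₃ = x' then (1:ℂ) else 0) *
            if π (pad m r x₄) = s ∧ π (pad m r x₅) = t then 1 else 0))
      = ∑ x₄ : BS m, ∑ x₅ : BS m, a x x₄ * (starRingEnd ℂ) (a x' x₅) *
          (if π (pad m r x₄) = s ∧ π (pad m r x₅) = t then 1 else 0) := by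
    intro π
    rw [Finset.sum_eq_single x]
    · rw [Finset.sum_eq_single x']
      · simp
      · intro b _ hb; simp [hb]
      · simp
    · intro b _ hb; simp [hb]
    · simp
  rw [Finset.sum_congr rfl fun π _ => key π, Finset.sum_comm]
  refine Finset.sum_congr rfl fun y _ => ?_
  rw [Finset.sum_comm]
  refine Finset.sum_congr rfl fun y' _ => ?_
  simp only [mul_ite, mul_one, mul_zero]
  rw [← Finset.sum_filter, Finset.sum_const, nsmul_eq_mul, mul_comm]

/-- The exact decomposition
`M(a) = ξ'(a) ⊗ (I_N/N) + (ξ(a) − ξ'(a)) ⊗ ((J_N − I_N)/(N(N−1)))`. -/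
theorem statement3 (m r : ℕ) (hm : 1 ≤ m) (a : BS m → BS m → ℂ) :
    Mmat m r a =
      xi' m a ⊗ₖ (((2 : ℂ) ^ (m + r))⁻¹ • (1 : Matrix (BS (m + r)) (BS (m + r)) ℂ))
      + (xi m a - xi' m a) ⊗ₖ
          ((((2 : ℂ) ^ (m + r)) * ((2 : ℂ) ^ (m + r) - 1))⁻¹ •
            (Jmat (m + r) - 1)) := by
  have hNcard : Fintype.card (BS (m + r)) = 2 ^ (m + r) := by simp
  set N : ℕ := 2 ^ (m + r) with hNdef
  have hN2 : 2 ≤ N := by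
    calc (2:ℕ) = 2 ^ 1 := rfl
    _ ≤ 2 ^ (m + r) := Nat.pow_le_pow_right (by norm_num) (by omega)
  have hcast : ((2 : ℂ) ^ (m + r)) = (N : ℂ) := by push_cast [hNdef]; ring
  have hNne : (N : ℂ) ≠ 0 := by
    simp only [Ne, Nat.cast_eq_zero]; omega
  have hN1ne : ((N - 1 : ℕ) : ℂ) ≠ 0 := by
    simp only [Ne, Nat.cast_eq_zero]; omega
  have hcast1 : ((2 : ℂ) ^ (m + r)) - 1 = ((N - 1 : ℕ) : ℂ) := by
    rw [hcast, Nat.cast_sub (by omega), Nat.cast_one]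
  have hfacN : (N.factorial : ℂ) = (N : ℂ) * ((N - 1).factorial : ℂ) := by
    rw [← Nat.cast_mul, Nat.mul_factorial_pred (by omega)]
  have hfacN1 : ((N - 1).factorial : ℂ) = ((N - 1 : ℕ) : ℂ) * ((N - 2).factorial : ℂ) := by
    rw [← Nat.cast_mul]
    congr 1
    have : N - 1 - 1 = N - 2 := by omega
    rw [← this, Nat.mul_factorial_pred (by omega)]
  have hfac1 : ((N.factorial : ℂ))⁻¹ * ((N - 1).factorial : ℂ) = ((2 : ℂ) ^ (m + r))⁻¹ := by
    rw [hcast, hfacN, mul_inv, mul_assoc,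
      inv_mul_cancel₀ (by exact_mod_cast Nat.cast_ne_zero.mpr (N - 1).factorial_ne_zero),
      mul_one]
  have hfac2 : ((N.factorial : ℂ))⁻¹ * ((N - 2).factorial : ℂ)
      = (((2 : ℂ) ^ (m + r)) * ((2 : ℂ) ^ (m + r) - 1))⁻¹ := by
    rw [hcast, show ((N : ℂ) - 1) = ((N - 1 : ℕ) : ℂ) from by
        rw [Nat.cast_sub (by omega), Nat.cast_one],
      hfacN, hfacN1, ← mul_assoc, mul_inv, mul_assoc,
      inv_mul_cancel₀ (by exact_mod_cast Nat.cast_ne_zero.mpr (N - 2).factorial_ne_zero),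
      mul_one]
  ext ⟨x, s⟩ ⟨x', t⟩
  rw [Mmat_apply, ← hNdef]
  simp only [Matrix.add_apply, Matrix.kroneckerMap_apply, Matrix.smul_apply,
    Matrix.sub_apply, Jmat, xi, xi', Matrix.of_apply, smul_eq_mul]
  by_cases hst : s = t
  · subst hst
    have hcount : ∀ y y' : BS m,
        ((Finset.univ.filter fun π : Equiv.Perm (BS (m + r)) =>
            π (pad m r y) = s ∧ π (pad m r y') = s).card : ℂ)
        = if y = y' then (((N - 1).factorial : ℕ) : ℂ) else 0 := by
      intro y y'
      by_cases h : y = y'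
      · subst h
        rw [if_pos rfl]
        simp only [and_self]
        rw [count_one, hNcard]
      · rw [if_neg h]
        have : (Finset.univ.filter fun π : Equiv.Perm (BS (m + r)) =>
            π (pad m r y) = s ∧ π (pad m r y') = s) = ∅ := by
          rw [Finset.filter_eq_empty_iff]
          rintro π - ⟨h1, h2⟩
          exact h (pad_inj m r (π.injective (h1.trans h2.symm)))
        rw [this]
        simp
    simp only [hcount, mul_ite, mul_zero, Finset.sum_ite_eq, Finset.mem_univ, if_true]
    rw [show (∑ y : BS m, a x y * (starRingEnd ℂ) (a x' y) * (((N - 1).factorial : ℕ) : ℂ))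
        = (∑ y : BS m, a x y * (starRingEnd ℂ) (a x' y)) * (((N - 1).factorial : ℕ) : ℂ) from
      (Finset.sum_mul _ _ _).symm]
    simp only [Matrix.one_apply_eq, mul_one, sub_self, mul_zero, add_zero]
    rw [mul_left_comm, hfac1]
  · have hcount : ∀ y y' : BS m,
        ((Finset.univ.filter fun π : Equiv.Perm (BS (m + r)) =>
            π (pad m r y) = s ∧ π (pad m r y') = t).card : ℂ)
        = if y = y' then 0 else (((N - 2).factorial : ℕ) : ℂ) := by
      intro y y'
      by_cases h : y = y'
      · subst h
        rw [if_pos rfl]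
        have : (Finset.univ.filter fun π : Equiv.Perm (BS (m + r)) =>
            π (pad m r y) = s ∧ π (pad m r y) = t) = ∅ := by
          rw [Finset.filter_eq_empty_iff]
          rintro π - ⟨h1, h2⟩
          exact hst (h1.symm.trans h2)
        rw [this]
        simp
      · rw [if_neg h, count_pair _ _ _ _ (fun hp => h (pad_inj m r hp)) hst, hNcard]
    simp only [hcount]
    have expand : ∀ y y' : BS m,
        a x y * (starRingEnd ℂ) (a x' y') *
            (if y = y' then (0:ℂ) else (((N - 2).factorial : ℕ) : ℂ))
        = a x y * (starRingEnd ℂ) (a x' y') * (((N - 2).factorial : ℕ) : ℂ)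
          - (if y = y' then
              a x y * (starRingEnd ℂ) (a x' y') * (((N - 2).factorial : ℕ) : ℂ) else 0) := by
      intro y y'
      by_cases h : y = y' <;> simp [h]
    simp only [expand, Finset.sum_sub_distrib, Finset.sum_ite_eq, Finset.mem_univ, if_true]
    simp only [← Finset.sum_mul, ← Finset.mul_sum, ← map_sum]
    simp only [Matrix.one_apply_ne hst, mul_zero, zero_mul, zero_add, sub_zero, mul_one]
    rw [← sub_mul, mul_left_comm, hfac2]
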